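/- For natural numbers d ≥ 2, k₀, p, q, the nested sum ∑_{0 ≤ k_{d-1} ≤ … ≤ k₁ ≤ k₀} [∏_{j=0}^{d-2} C(k_j, k_{j+1}) · (2k_j − 2k_{j+1} + q − 1)!!] · (2k_{d-1} + p − 1)!! equals (2k₀ + p + (d−1)(q+1) − 1)!! · (p−1)!! · ((q−1)!!)^{d−1} / (p + (d−1)(q+1) − 1)!!, where in the product one sets k_0 := k₀ as the top index (i.e. k₁ ranges from 0 to k₀). -/
import Mathlib


open scoped Nat
open scoped Classical


lemma df_succ (x : ℕ) : (x+1)‼ = (x+1) * (x-1)‼ := by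
  cases x with
  | zero => simp [Nat.doubleFactorial]
  | succ y => simpa using Nat.doubleFactorial_add_two y

def A (q j : ℕ) : ℕ := (2*j+q-1)‼
def B (p m : ℕ) : ℕ := (2*m+p-1)‼

lemma A_succ (q j : ℕ) : A q (j+1) = (2*j+q+1) * A q j := by
  unfold A
  have h : 2*(j+1)+q-1 = (2*j+q)+1 := by omega
  rw [h, df_succ]

def oneSum (p q k : ℕ) : ℕ :=
  ∑ m ∈ Finset.range (k+1), k.choose m * (A q (k-m) * B p m)

lemma oneSum_succ (p q k : ℕ) : oneSum p q (k+1) = (2*k+p+q+2) * oneSum p q k := by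
  unfold oneSum
  rw [Finset.sum_range_succ']
  have e1 : ∀ m ∈ Finset.range (k+1),
      (k+1).choose (m+1) * (A q (k+1-(m+1)) * B p (m+1))
      = k.choose m * (A q (k-m) * B p (m+1)) + k.choose (m+1) * (A q (k-m) * B p (m+1)) := by
    intro m hm
    have h3 : k+1-(m+1) = k-m := by omega
    rw [h3, Nat.choose_succ_succ, add_mul]
  rw [Finset.sum_congr rfl e1, Finset.sum_add_distrib]
  have e2 : (∑ m ∈ Finset.range (k+1), k.choose (m+1) * (A q (k-m) * B p (m+1)))
      + (k+1).choose 0 * (A q (k+1-0) * B p 0)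
      = ∑ m ∈ Finset.range (k+1), k.choose m * (A q (k+1-m) * B p m) := by
    rw [Finset.sum_range_succ' (fun m => k.choose m * (A q (k+1-m) * B p m)) k]
    rw [Finset.sum_range_succ (fun m => k.choose (m+1) * (A q (k-m) * B p (m+1))) k]
    rw [Nat.choose_succ_self, zero_mul, add_zero]
    congr 1
    · apply Finset.sum_congr rfl
      intro m hm
      have : k+1-(m+1) = k-m := by omega
      rw [this]
    · simp
  rw [add_assoc, e2, ← Finset.sum_add_distrib, Finset.mul_sum]
  apply Finset.sum_congr rfl
  intro m hm
  rw [Finset.mem_range] at hm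
  have hB : B p (m+1) = (2*m+p+1) * B p m := by
    unfold B
    have h : 2*(m+1)+p-1 = (2*m+p)+1 := by omega
    rw [h, df_succ]
  have hA : A q (k+1-m) = (2*(k-m)+q+1) * A q (k-m) := by
    have : k+1-m = (k-m)+1 := by omega
    rw [this, A_succ]
  rw [hB, hA]
  have h2k : 2*k+p+q+2 = 2*m+p+1 + (2*(k-m)+q+1) := by omega
  rw [h2k]
  ring

lemma key (p q k : ℕ) : (p+q)‼ * oneSum p q k = (2*k+p+q)‼ * ((p-1)‼ * (q-1)‼) := by
  induction k with
  | zero =>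
      unfold oneSum
      simp only [Finset.sum_range_one, Nat.choose_self, one_mul, A, B,
        Nat.sub_zero, Nat.mul_zero, Nat.zero_add]
      ring
  | succ k ih =>
      rw [oneSum_succ, show 2*(k+1)+p+q = (2*k+p+q)+2 by omega,
        Nat.doubleFactorial_add_two, ← mul_assoc, mul_comm ((p+q)‼) (2*k+p+q+2),
        mul_assoc, ih]
      ring

def chainSet (n k : ℕ) : Finset (Fin (n+1) → Fin (k+1)) :=
  Finset.univ.filter (fun c => (c 0 : ℕ) = k ∧
    ∀ i j : Fin (n+1), i ≤ j → (c j : ℕ) ≤ (c i : ℕ))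

def chainSum (n k p q : ℕ) : ℕ :=
  ∑ c ∈ chainSet n k,
    (∏ j : Fin n, (c j.castSucc : ℕ).choose (c j.succ) *
      (2 * ((c j.castSucc : ℕ) - (c j.succ : ℕ)) + q - 1)‼) *
      (2 * (c (Fin.last n) : ℕ) + p - 1)‼

lemma chainSum_zero (k p q : ℕ) : chainSum 0 k p q = (2*k+p-1)‼ := by
  unfold chainSum
  have h : chainSet 0 k = {fun _ => (⟨k, Nat.lt_succ_self k⟩ : Fin (k+1))} := by
    ext c
    simp only [chainSet, Finset.mem_filter, Finset.mem_univ, true_and,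
      Finset.mem_singleton]
    constructor
    · rintro ⟨h0, -⟩
      funext i
      have hi : i = 0 := Fin.ext (by omega)
      subst hi
      exact Fin.ext h0
    · rintro rfl
      refine ⟨rfl, fun i j _ => ?_⟩
      have hij : i = j := Fin.ext (by omega)
      subst hij
      exact le_refl _
  rw [h, Finset.sum_singleton]
  simp

lemma chainSum_succ (n k p q : ℕ) :
    chainSum (n+1) k p q
      = ∑ m : Fin (k+1), (k.choose m * A q (k - m)) * chainSum n m p q := by
  unfold chainSum
  rw [← Finset.sum_fiberwise (chainSet (n+1) k) (fun c => c 1)]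
  apply Finset.sum_congr rfl
  intro m _
  rw [Finset.mul_sum]
  have hm : (m : ℕ) ≤ k := Nat.lt_succ_iff.mp m.isLt
  refine Finset.sum_nbij'
    (i := fun c (i : Fin (n+1)) =>
      (⟨min ((c i.succ : ℕ)) m, by omega⟩ : Fin ((m:ℕ)+1)))
    (j := fun c' (i : Fin (n+2)) =>
      Fin.cases (⟨k, Nat.lt_succ_self k⟩ : Fin (k+1))
        (fun j => ⟨(c' j : ℕ), by have := (c' j).isLt; omega⟩) i)
    ?_ ?_ ?_ ?_ ?_
  · -- hi
    intro c hc
    simp only [Finset.mem_filter, Finset.mem_univ, true_and, chainSet] at hc ⊢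
    obtain ⟨⟨h0, hanti⟩, h1⟩ := hc
    refine ⟨?_, ?_⟩
    · show min ((c (0:Fin (n+1)).succ : ℕ)) m = (m:ℕ)
      have : (0:Fin (n+1)).succ = (1 : Fin (n+2)) := rfl
      rw [this, h1]
      omega
    · intro i j hij
      have := hanti i.succ j.succ (Fin.succ_le_succ_iff.mpr hij)
      show min ((c j.succ : ℕ)) m ≤ min ((c i.succ : ℕ)) m
      omega
  · -- hj
    intro c' hc'
    simp only [Finset.mem_filter, Finset.mem_univ, true_and, chainSet] at hc' ⊢
    obtain ⟨h0, hanti⟩ := hc'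
    refine ⟨⟨?_, ?_⟩, ?_⟩
    · simp
    · intro i j hij
      induction i using Fin.cases with
      | zero =>
        induction j using Fin.cases with
        | zero => exact le_refl _
        | succ j' => simp; omega
      | succ i' =>
        induction j using Fin.cases with
        | zero =>
          exfalso
          have : (i'.succ : ℕ) ≤ (0 : Fin (n+2)) := hij
          simp at this
        | succ j' =>
          have hij' : i' ≤ j' := by
            have : (i'.succ : ℕ) ≤ (j'.succ : ℕ) := hij
            simp at this
            exact this
          have := hanti i' j' hij'
          simp only [Fin.cases_succ]
          exact this
    · show ((Fin.cases _ _ (1 : Fin (n+2)) : Fin (k+1))) = m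
      have h1 : (1 : Fin (n+2)) = (0 : Fin (n+1)).succ := rfl
      rw [h1, Fin.cases_succ]
      exact Fin.ext (by simp [h0])
  · -- left inverse
    intro c hc
    simp only [Finset.mem_filter, Finset.mem_univ, true_and, chainSet] at hc
    obtain ⟨⟨h0, hanti⟩, h1⟩ := hc
    funext i
    induction i using Fin.cases with
    | zero => exact Fin.ext (by simp [h0])
    | succ j =>
      apply Fin.ext
      simp only [Fin.cases_succ]
      have : (c j.succ : ℕ) ≤ (c (1 : Fin (n+2)) : ℕ) :=
        hanti 1 j.succ (Fin.succ_le_succ_iff.mpr (Fin.zero_le j))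
      rw [h1] at this
      simp [min_eq_left this]
  · -- right inverse
    intro c' hc'
    simp only [Finset.mem_filter, Finset.mem_univ, true_and, chainSet] at hc'
    obtain ⟨h0, hanti⟩ := hc'
    funext i
    apply Fin.ext
    simp only [Fin.cases_succ]
    have : (c' i : ℕ) ≤ (m : ℕ) := Nat.lt_succ_iff.mp (c' i).isLt
    simp [min_eq_left this]
  · -- summand equality
    intro c hc
    simp only [Finset.mem_filter, Finset.mem_univ, true_and, chainSet] at hc
    obtain ⟨⟨h0, hanti⟩, h1⟩ := hc
    have hle : ∀ i : Fin (n+1), (c i.succ : ℕ) ≤ (m : ℕ) := by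
      intro i
      have := hanti 1 i.succ (Fin.succ_le_succ_iff.mpr (Fin.zero_le i))
      rw [h1] at this; exact this
    rw [Fin.prod_univ_succ]
    have hT0 : (c ((0:Fin (n+1)).castSucc) : ℕ).choose (c ((0:Fin (n+1)).succ)) *
        (2 * ((c ((0:Fin (n+1)).castSucc) : ℕ) - (c ((0:Fin (n+1)).succ) : ℕ)) + q - 1)‼
        = k.choose m * A q (k - m) := by
      have e0 : ((0:Fin (n+1)).castSucc) = (0 : Fin (n+2)) := rfl
      have e1 : ((0:Fin (n+1)).succ) = (1 : Fin (n+2)) := rfl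
      rw [e0, e1, h0, h1, A]
    rw [hT0]
    have hTail : ∀ j : Fin n,
        (c (j.succ).castSucc : ℕ).choose (c (j.succ).succ) *
          (2 * ((c (j.succ).castSucc : ℕ) - (c (j.succ).succ : ℕ)) + q - 1)‼
        = (min ((c (j.castSucc).succ : ℕ)) m).choose (min ((c (j.succ).succ : ℕ)) m) *
          (2 * ((min ((c (j.castSucc).succ : ℕ)) m) - (min ((c (j.succ).succ : ℕ)) m)) + q - 1)‼ := by
      intro j
      rw [← Fin.succ_castSucc]
      rw [min_eq_left (hle j.castSucc), min_eq_left (hle j.succ)]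
    have hLast : (c (Fin.last (n+1)) : ℕ) = min ((c (Fin.last n).succ : ℕ)) m := by
      rw [Fin.succ_last, min_eq_left]
      have := hle (Fin.last n)
      rw [Fin.succ_last] at this
      exact this
    rw [Finset.prod_congr rfl (fun j _ => hTail j), hLast]
    simp only [Fin.cases_succ]
    ring

lemma main_chain (p q : ℕ) : ∀ n k, (p + n*(q+1) - 1)‼ * chainSum n k p q
    = (2*k + p + n*(q+1) - 1)‼ * ((p-1)‼ * ((q-1)‼)^n) := by
  intro n
  induction n with
  | zero =>
      intro k
      simp only [Nat.zero_mul, Nat.add_zero, pow_zero, mul_one, chainSum_zero]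
      ring
  | succ n ih =>
      intro k
      have hPq : p + (n+1)*(q+1) - 1 = (p + n*(q+1)) + q := by
        have : (n+1)*(q+1) = n*(q+1) + (q+1) := by ring
        omega
      have h2 : 2*k + p + (n+1)*(q+1) - 1 = 2*k + (p + n*(q+1)) + q := by
        have : (n+1)*(q+1) = n*(q+1) + (q+1) := by ring
        omega
      have hD : 0 < (p + n*(q+1) - 1)‼ := Nat.doubleFactorial_pos _
      apply Nat.eq_of_mul_eq_mul_left hD
      rw [chainSum_succ, hPq, h2, Finset.mul_sum, Finset.mul_sum]
      have hsum : ∀ m : Fin (k+1),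
          (p+n*(q+1)-1)‼ * (((p+n*(q+1))+q)‼ * ((k.choose m * A q (k-(m:ℕ))) * chainSum n m p q))
          = ((p-1)‼*((q-1)‼)^n) * (((p+n*(q+1))+q)‼ *
              (k.choose m * (A q (k-(m:ℕ)) * B (p+n*(q+1)) m))) := by
        intro m
        have ihm := ih (m:ℕ)
        have e : 2*(m:ℕ) + p + n*(q+1) - 1 = 2*(m:ℕ) + (p+n*(q+1)) - 1 := by omega
        rw [e] at ihm
        calc (p+n*(q+1)-1)‼ * (((p+n*(q+1))+q)‼ * ((k.choose m * A q (k-(m:ℕ))) * chainSum n m p q))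
            = ((p+n*(q+1))+q)‼ * ((k.choose m * A q (k-(m:ℕ))) *
                ((p+n*(q+1)-1)‼ * chainSum n m p q)) := by ring
          _ = ((p+n*(q+1))+q)‼ * ((k.choose m * A q (k-(m:ℕ))) *
                ((2*(m:ℕ)+(p+n*(q+1))-1)‼ * ((p-1)‼ * ((q-1)‼)^n))) := by rw [ihm]
          _ = ((p-1)‼*((q-1)‼)^n) * (((p+n*(q+1))+q)‼ *
                (k.choose m * (A q (k-(m:ℕ)) * B (p+n*(q+1)) m))) := by
                rw [B]; ring
      rw [Finset.sum_congr rfl (fun m _ => hsum m), ← Finset.mul_sum, ← Finset.mul_sum]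
      rw [Fin.sum_univ_eq_sum_range (fun m => k.choose m * (A q (k-m) * B (p+n*(q+1)) m)) (k+1)]
      rw [show (∑ m ∈ Finset.range (k+1), k.choose m * (A q (k-m) * B (p+n*(q+1)) m))
            = oneSum (p+n*(q+1)) q k from rfl]
      rw [key (p+n*(q+1)) q k]
      rw [pow_succ]
      ring

/-- For `d ≥ 2`, `k₀`, `p`, `q`, the nested sum over weakly decreasing chains
`k₀ = k_0 ≥ k_1 ≥ … ≥ k_{d−1} ≥ 0` of
`[∏_{j=0}^{d−2} C(k_j, k_{j+1}) (2k_j − 2k_{j+1} + q − 1)‼] (2k_{d−1} + p − 1)‼`,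
multiplied by `(p + (d−1)(q+1) − 1)‼`, equals
`(2k₀ + p + (d−1)(q+1) − 1)‼ (p−1)‼ ((q−1)‼)^{d−1}`.
A chain is encoded as an antitone function `c : Fin (d−1+1) → Fin (k₀+1)` with `c 0 = k₀`. -/
theorem nested_doubleFactorial_sum (d k₀ p q : ℕ) (hd : 2 ≤ d) :
    (p + (d - 1) * (q + 1) - 1)‼ *
        ∑ c ∈ Finset.univ.filter (fun c : Fin (d - 1 + 1) → Fin (k₀ + 1) =>
            (c 0 : ℕ) = k₀ ∧ ∀ i j : Fin (d - 1 + 1), i ≤ j → (c j : ℕ) ≤ (c i : ℕ)),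
          (∏ j : Fin (d - 1),
              (c j.castSucc : ℕ).choose (c j.succ) *
                (2 * ((c j.castSucc : ℕ) - (c j.succ : ℕ)) + q - 1)‼) *
            (2 * (c (Fin.last (d - 1)) : ℕ) + p - 1)‼ =
      (2 * k₀ + p + (d - 1) * (q + 1) - 1)‼ * (p - 1)‼ * ((q - 1)‼) ^ (d - 1) := by
  have h := main_chain p q (d-1) k₀
  unfold chainSum chainSet at h
  rw [h]
  ring
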